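/- Let (R, m) be a standard graded k-algebra, x ∈ m a nonzero linear form, and T a homogeneous ideal of R such that x is a nonzerodivisor on R/T. Then x is a nonzerodivisor on the associated graded module gr_m(T) if and only if m^s T : x = m^{s-1} T for all s ≥ 1. -/

import Mathlib

/-- let `R` be a standard graded `k`-algebra with graded maximal
ideal `m`, `x ∈ m` a nonzero linear form, and `T` a homogeneous ideal such that
`x` is a nonzerodivisor on `R/T` (i.e. `T : x = T`). Then `x` is a
nonzerodivisor on the associated graded module `gr_m(T)` — equivalently
`(m^(s+2)T : x) ∩ m^s T = m^(s+1) T` for all `s ≥ 0` — if and only if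
`m^s T : x = m^(s-1) T` for all `s ≥ 1`. -/
theorem grm_regular_iff_colon
    {k R : Type*} [Field k] [CommRing R] [Algebra k R]
    (𝒜 : ℕ → Submodule k R) [GradedAlgebra 𝒜]
    (hstd : ∀ n, 𝒜 (n + 1) = 𝒜 1 * 𝒜 n)
    (m : Ideal R) (hm : m = (HomogeneousIdeal.irrelevant 𝒜).toIdeal)
    (x : R) (hx1 : x ∈ 𝒜 1) (hx0 : x ≠ 0)
    (T : Ideal R) (hT : T.IsHomogeneous 𝒜)
    (hreg : ∀ a : R, x * a ∈ T → a ∈ T) :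
    (∀ s : ℕ,
        (m ^ (s + 2) * T).colon (Ideal.span {x}) ⊓ (m ^ s * T) = m ^ (s + 1) * T) ↔
      (∀ s : ℕ, 1 ≤ s →
        (m ^ s * T).colon (Ideal.span {x}) = m ^ (s - 1) * T) := by
  -- x ∈ m
  have hxm : x ∈ m := by
    rw [hm]
    show GradedRing.projZeroRingHom 𝒜 x = 0
    exact DirectSum.decompose_of_mem_ne 𝒜 hx1 one_ne_zero
  -- multiplying a member of m^s*T by x lands in m^(s+1)*T
  have hmul : ∀ (s : ℕ) (a : R), a ∈ m ^ s * T → a * x ∈ m ^ (s + 1) * T := by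
    intro s a ha
    have : x * a ∈ m * (m ^ s * T) := Ideal.mul_mem_mul hxm ha
    rw [← mul_assoc, ← pow_succ'] at this
    rwa [mul_comm x a] at this
  -- the easy inclusion m^(s-1)*T ≤ (m^s*T : x), stated for s+1
  have hback : ∀ s : ℕ, m ^ s * T ≤ (m ^ (s + 1) * T).colon (Ideal.span {x}) := by
    intro s a ha
    exact Ideal.mem_colon_span_singleton.mpr (hmul s a ha)
  -- m^(s+1)*T ≤ m^s*T
  have hmono : ∀ s : ℕ, m ^ (s + 1) * T ≤ m ^ s * T :=
    fun s => Ideal.mul_mono_left (Ideal.pow_le_pow_right (Nat.le_succ s))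
  constructor
  · intro hA
    -- prove by strong induction: ∀ s, (m^(s+1)*T : x) = m^s*T
    have key : ∀ s : ℕ, (m ^ (s + 1) * T).colon (Ideal.span {x}) = m ^ s * T := by
      intro s
      induction s with
      | zero =>
        apply le_antisymm
        · intro a ha
          have hax : a * x ∈ m ^ 1 * T := Ideal.mem_colon_span_singleton.mp ha
          have : a * x ∈ T := (Ideal.mul_le_right : m * T ≤ T) (pow_one m ▸ hax : a * x ∈ m * T)
          have := hreg a (by rwa [mul_comm])
          simpa [pow_zero, one_mul] using this
        · simpa [pow_zero, one_mul] using hback 0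
      | succ n ih =>
        apply le_antisymm
        · intro a ha
          have hax : a * x ∈ m ^ (n + 2) * T := Ideal.mem_colon_span_singleton.mp ha
          have h1 : a * x ∈ m ^ (n + 1) * T := hmono (n + 1) hax
          have h2 : a ∈ m ^ n * T := ih ▸ Ideal.mem_colon_span_singleton.mpr h1
          have := (hA n).le ⟨ha, h2⟩
          exact this
        · exact hback (n + 1)
    intro s hs
    obtain ⟨t, rfl⟩ := Nat.exists_eq_add_of_le hs
    rw [add_comm 1 t]
    simpa using key t
  · intro hB s
    have h2 : (m ^ (s + 2) * T).colon (Ideal.span {x}) = m ^ (s + 1) * T := by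
      simpa using hB (s + 2) (by omega)
    rw [h2]
    exact inf_eq_left.mpr (hmono s)
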